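/- Let {e_n} be an orthonormal basis of a separable Hilbert space H. For each n, let V_n = span{e_n} and W_n = span{e_n, e_{n+1}}. Then for every subset σ of the natural numbers and every f ∈ H, ‖f‖² ≤ Σ_{n∈σ} ‖P_{V_n} f‖² + Σ_{n∈σᶜ} ‖P_{W_n} f‖² ≤ 2‖f‖². Hence {(V_n,1)} and {(W_n,1)} are weaving fusion frames for H with universal bounds 1 and 2. -/

import Mathlib

open scoped RealInnerProductSpace

/-- For an orthonormal basis `{e n}` of a separable Hilbert space `H`,
with `V n = span {e n}` and `W n = span {e n, e (n+1)}`, every weaving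
`{V n}_{n ∈ σ} ∪ {W n}_{n ∈ σᶜ}` satisfies the fusion frame inequality with
universal bounds `1` and `2`; hence `{(V n, 1)}` and `{(W n, 1)}` are weaving
fusion frames for `H`. -/
theorem stmt0 {H : Type*} [NormedAddCommGroup H] [InnerProductSpace ℝ H]
    [CompleteSpace H] (e : HilbertBasis ℕ ℝ H)
    (V W : ℕ → Submodule ℝ H)
    (hV : ∀ n, V n = Submodule.span ℝ ({e n} : Set H))
    (hW : ∀ n, W n = Submodule.span ℝ ({e n, e (n + 1)} : Set H))
    [∀ n, CompleteSpace (V n)] [∀ n, CompleteSpace (W n)]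
    (σ : Set ℕ) (f : H) :
    ‖f‖ ^ 2 ≤
        (∑' n : σ, ‖(Submodule.orthogonalProjectionOnto (V n) f : H)‖ ^ 2) +
          ∑' n : (σᶜ : Set ℕ), ‖(Submodule.orthogonalProjectionOnto (W n) f : H)‖ ^ 2 ∧
      (∑' n : σ, ‖(Submodule.orthogonalProjectionOnto (V n) f : H)‖ ^ 2) +
          (∑' n : (σᶜ : Set ℕ), ‖(Submodule.orthogonalProjectionOnto (W n) f : H)‖ ^ 2) ≤
        2 * ‖f‖ ^ 2 := by
  set a : ℕ → ℝ := fun n => ⟪e n, f⟫ ^ 2 with ha_def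
  have hone : ∀ i j : ℕ, ⟪e i, e j⟫ = if i = j then (1 : ℝ) else 0 :=
    orthonormal_iff_ite.mp e.orthonormal
  have hnorm1 : ∀ n, ‖e n‖ = 1 := e.orthonormal.1
  -- Parseval
  have hsum : HasSum a (‖f‖ ^ 2) := by
    have := e.hasSum_inner_mul_inner f f
    rw [real_inner_self_eq_norm_sq] at this
    refine this.congr_fun fun n => ?_
    simp [ha_def, real_inner_comm f (e n), sq]
  have sa : Summable a := hsum.summable
  have hanonneg : ∀ n, 0 ≤ a n := fun n => sq_nonneg _
  -- projection onto V n
  have hVn : ∀ n, ‖(Submodule.orthogonalProjectionOnto (V n) f : H)‖ ^ 2 = a n := by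
    intro n
    have h1 : (Submodule.orthogonalProjectionOnto (V n) f : H) = ⟪e n, f⟫ • e n := by
      refine Submodule.eq_starProjection_of_mem_of_inner_eq_zero ?_ fun w hw => ?_
      · rw [hV n]
        exact Submodule.smul_mem _ _ (Submodule.subset_span rfl)
      · rw [hV n] at hw
        induction hw using Submodule.span_induction with
        | mem x hx =>
          rw [Set.mem_singleton_iff.mp hx]
          simp [inner_sub_left, real_inner_smul_left, hone, real_inner_comm f (e n), hnorm1]
        | zero => simp
        | add x y _ _ hx hy => rw [inner_add_right, hx, hy, add_zero]
        | smul c x _ hx => rw [inner_smul_right, hx, mul_zero]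
    rw [h1, norm_smul, hnorm1 n]
    simp [ha_def, sq_abs]
  -- projection onto W n
  have hWn : ∀ n, ‖(Submodule.orthogonalProjectionOnto (W n) f : H)‖ ^ 2 = a n + a (n + 1) := by
    intro n
    set g : H := ⟪e n, f⟫ • e n + ⟪e (n + 1), f⟫ • e (n + 1) with hg
    have hgmem : g ∈ W n := by
      rw [hW n]
      exact Submodule.add_mem _
        (Submodule.smul_mem _ _ (Submodule.subset_span (by simp)))
        (Submodule.smul_mem _ _ (Submodule.subset_span (by simp)))
    have hne : n ≠ n + 1 := by omega
    have horthn : ⟪f - g, e n⟫ = 0 := by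
      simp [hg, inner_sub_left, inner_add_left, real_inner_smul_left,
        hone, hne, real_inner_comm f (e n), hnorm1]
    have horthn1 : ⟪f - g, e (n + 1)⟫ = 0 := by
      simp [hg, inner_sub_left, inner_add_left, real_inner_smul_left,
        hone, hne.symm, real_inner_comm f (e (n + 1)), hnorm1]
    have hproj : (Submodule.orthogonalProjectionOnto (W n) f : H) = g := by
      refine Submodule.eq_starProjection_of_mem_of_inner_eq_zero hgmem fun w hw => ?_
      rw [hW n] at hw
      induction hw using Submodule.span_induction with
      | mem x hx =>
        rcases hx with hx | hx
        · rw [hx]; exact horthn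
        · rw [Set.mem_singleton_iff.mp hx]; exact horthn1
      | zero => simp
      | add x y _ _ hx hy => rw [inner_add_right, hx, hy, add_zero]
      | smul c x _ hx => rw [inner_smul_right, hx, mul_zero]
    have hinner0 : ⟪⟪e n, f⟫ • e n, ⟪e (n + 1), f⟫ • e (n + 1)⟫ = (0 : ℝ) := by
      simp [real_inner_smul_left, inner_smul_right, hone, hne]
    rw [hproj, hg, norm_add_sq_real, hinner0]
    simp only [norm_smul, hnorm1, mul_one, mul_zero, add_zero]
    simp [ha_def, sq_abs]
  -- rewrite both tsums
  have hVsum : (∑' n : σ, ‖(Submodule.orthogonalProjectionOnto (V n) f : H)‖ ^ 2)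
      = ∑' n : σ, a n := by
    exact tsum_congr fun n => hVn n
  have hWsum : (∑' n : (σᶜ : Set ℕ), ‖(Submodule.orthogonalProjectionOnto (W n) f : H)‖ ^ 2)
      = (∑' n : (σᶜ : Set ℕ), a n) + ∑' n : (σᶜ : Set ℕ), a (n + 1) := by
    calc (∑' n : (σᶜ : Set ℕ), ‖(Submodule.orthogonalProjectionOnto (W n) f : H)‖ ^ 2)
        = ∑' n : (σᶜ : Set ℕ), (a n + a ((n : ℕ) + 1)) := tsum_congr fun n => hWn n
      _ = _ := Summable.tsum_add (sa.subtype _)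
          ((sa.comp_injective (add_left_injective 1)).subtype _)
  have hsplit : (∑' n : σ, a n) + (∑' n : (σᶜ : Set ℕ), a n) = ‖f‖ ^ 2 := by
    rw [sa.tsum_subtype_add_tsum_subtype_compl σ, hsum.tsum_eq]
  have hshift_nonneg : 0 ≤ ∑' n : (σᶜ : Set ℕ), a (n + 1) :=
    tsum_nonneg fun n => hanonneg _
  have hshift_le : (∑' n : (σᶜ : Set ℕ), a (n + 1)) ≤ ‖f‖ ^ 2 := by
    rw [← hsum.tsum_eq]
    exact Summable.tsum_le_tsum_of_inj (fun n : (σᶜ : Set ℕ) => (n : ℕ) + 1)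
      (fun x y hxy => Subtype.ext (Nat.succ_injective hxy))
      (fun c _ => hanonneg c) (fun n => le_refl _)
      ((sa.comp_injective (add_left_injective 1)).subtype _) sa
  rw [hVsum, hWsum]
  constructor
  · calc ‖f‖ ^ 2 = (∑' n : σ, a n) + (∑' n : (σᶜ : Set ℕ), a n) := hsplit.symm
      _ ≤ (∑' n : σ, a n) + ((∑' n : (σᶜ : Set ℕ), a n) + ∑' n : (σᶜ : Set ℕ), a (n + 1)) := by
          linarith
  · calc (∑' n : σ, a n) + ((∑' n : (σᶜ : Set ℕ), a n) + ∑' n : (σᶜ : Set ℕ), a (n + 1))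
        ≤ ‖f‖ ^ 2 + ‖f‖ ^ 2 := by linarith
      _ = 2 * ‖f‖ ^ 2 := by ring
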